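/- For a prime p, integers j ≥ 1 and m with 1 ≤ m ≤ p, the p-adic valuation of the multinomial coefficient (m(p^j−1))! / ((p^j−1)!)^m equals (m−1)j. -/

import Mathlib

lemma floor_aux (a b m : ℕ) (ha : 1 ≤ a) (hm1 : 1 ≤ m) (hmb : m ≤ b) :
    m * (a * b - 1) / b = m * a - 1 := by
  have hb : 0 < b := le_trans hm1 hmb
  have key : m * (a * b - 1) = b * (m * a - 1) + (b - m) := by
    have h1 : 1 ≤ a * b := Nat.one_le_iff_ne_zero.mpr (by positivity)
    have h2 : 1 ≤ m * a := Nat.one_le_iff_ne_zero.mpr (by positivity)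
    zify [h1, h2, hmb]
    ring
  rw [key, Nat.mul_add_div hb, Nat.div_eq_of_lt (by omega), add_zero]

/-- For a prime `p`, integers `j ≥ 1` and `1 ≤ m ≤ p`, the `p`-adic valuation of the
multinomial coefficient `(m(p^j−1))! / ((p^j−1)!)^m` equals `(m−1)·j`. -/
theorem stmt0 (p j m : ℕ) (hp : p.Prime) (hj : 1 ≤ j) (hm1 : 1 ≤ m) (hm2 : m ≤ p) :
    padicValNat p ((m * (p ^ j - 1)).factorial / ((p ^ j - 1).factorial) ^ m)
      = (m - 1) * j := by
  haveI : Fact p.Prime := ⟨hp⟩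
  have hp1 : 1 < p := hp.one_lt
  set n := p ^ j - 1 with hn
  have hpj : 1 ≤ p ^ j := Nat.one_le_pow _ _ hp.pos
  have hn_pos : 1 ≤ n := by
    have : p ≤ p ^ j := Nat.le_self_pow (by omega) p
    omega
  -- divisibility
  have hdvd : (n.factorial) ^ m ∣ (m * n).factorial := by
    have := Nat.prod_factorial_dvd_factorial_sum (Finset.range m) (fun _ => n)
    simpa [Finset.sum_const, Finset.prod_const, Finset.card_range, Nat.smul_one_eq_cast,
      mul_comm] using this
  -- floor computations
  have hfloor : ∀ i ∈ Finset.Ico 1 (j + 1), (m * n) / p ^ i = m * p ^ (j - i) - 1 := by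
    intro i hi
    simp only [Finset.mem_Ico] at hi
    have hij : i ≤ j := by omega
    have hsplit : p ^ (j - i) * p ^ i = p ^ j := by
      rw [← pow_add]; congr 1; omega
    have hmp : m ≤ p ^ i := le_trans hm2 (Nat.le_self_pow (by omega) p)
    have := floor_aux (p ^ (j - i)) (p ^ i) m (Nat.one_le_pow _ _ hp.pos) hm1 hmp
    rw [hn, ← hsplit]
    exact this
  -- valuation of (m*n)!
  have hlog : Nat.log p (m * n) < j + 1 := by
    apply Nat.log_lt_of_lt_pow (by positivity)
    calc m * n ≤ p * n := Nat.mul_le_mul_right _ hm2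
      _ < p * p ^ j := by have h : n < p ^ j := by omega
                          exact Nat.mul_lt_mul_of_le_of_lt le_rfl h hp.pos
      _ = p ^ (j + 1) := by ring
  have hv1 : padicValNat p ((m * n).factorial)
      = ∑ i ∈ Finset.Ico 1 (j + 1), (m * p ^ (j - i) - 1) := by
    rw [padicValNat_factorial hlog]
    exact Finset.sum_congr rfl hfloor
  have hlog2 : Nat.log p n < j + 1 := by
    apply Nat.log_lt_of_lt_pow (by omega)
    calc n < p ^ j := by omega
      _ ≤ p ^ (j + 1) := Nat.pow_le_pow_right hp.pos (by omega)
  have hv2 : padicValNat p (n.factorial)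
      = ∑ i ∈ Finset.Ico 1 (j + 1), (p ^ (j - i) - 1) := by
    rw [padicValNat_factorial hlog2]
    refine Finset.sum_congr rfl fun i hi => ?_
    simp only [Finset.mem_Ico] at hi
    have hsplit : p ^ (j - i) * p ^ i = p ^ j := by
      rw [← pow_add]; congr 1; omega
    have := floor_aux (p ^ (j - i)) (p ^ i) 1 (Nat.one_le_pow _ _ hp.pos) le_rfl
      (Nat.one_le_pow _ _ hp.pos)
    simp only [one_mul] at this
    rw [hn, ← hsplit]
    exact this
  -- sum identity
  have hsum : ∑ i ∈ Finset.Ico 1 (j + 1), (m * p ^ (j - i) - 1)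
      = m * (∑ i ∈ Finset.Ico 1 (j + 1), (p ^ (j - i) - 1)) + (m - 1) * j := by
    rw [Finset.mul_sum]
    have : ∀ i ∈ Finset.Ico 1 (j + 1),
        (m * p ^ (j - i) - 1) = m * (p ^ (j - i) - 1) + (m - 1) := by
      intro i _
      have h1 : 1 ≤ p ^ (j - i) := Nat.one_le_pow _ _ hp.pos
      have h2 : m ≤ m * p ^ (j - i) := Nat.le_mul_of_pos_right m (by omega)
      rw [Nat.mul_sub, mul_one]
      omega
    rw [Finset.sum_congr rfl this, Finset.sum_add_distrib, Finset.sum_const,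
      Nat.card_Ico, smul_eq_mul]
    rw [Nat.add_sub_cancel, Nat.mul_comm]
  rw [padicValNat.div_of_dvd hdvd,
    padicValNat.pow (n.factorial) m, hv1, hv2, hsum]
  simp
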